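/- Let S_Γ be the unital C*-subalgebra of O_Γ generated by the semicircular elements s_v = ℓ_v + ℓ_v*, v ∈ V. Then the GNS representation of S_Γ with respect to the restriction of the vacuum state τ_vac is faithful; concretely, the orbit S_Γ·Ω of the vacuum vector is dense in the configuration space H_Γ(C^n). -/
import Mathlib


/-!
Statement 7 (the vacuum vector is cyclic for the semicircular subalgebra `S_Γ ⊆ O_Γ`;
equivalently, the GNS representation of `S_Γ` w.r.t. the vacuum state is faithful).

The universal Toeplitz algebra `O_Γ` is realized concretely on the configuration space
`H_Γ(ℂ^n)`: the creation operators `ℓ_v` are isometries satisfying the Crisp–Laca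
relations, the annihilation operators kill the unit vacuum vector `Ω`, and the vectors
`ℓ_{v₁} ⋯ ℓ_{v_k} Ω` (the images of the pure tensors `e_{v₁} ⊗ ⋯ ⊗ e_{v_k}`) span a
dense subspace.  `S_Γ` is the unital C*-subalgebra generated by the `s_v = ℓ_v + ℓ_v*`.
The conclusion is that `S_Γ · Ω` is dense in the configuration space.
-/

noncomputable section

theorem semicircular_algebra_vacuum_cyclic
    {V : Type*} (Γ : SimpleGraph V)
    {H : Type*} [NormedAddCommGroup H] [InnerProductSpace ℂ H] [CompleteSpace H]
    (ℓ : V → H →L[ℂ] H) (Ω : H)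
    -- the `ℓ v` are isometries
    (hiso : ∀ v, star (ℓ v) * ℓ v = 1)
    -- T1
    (hT1a : ∀ v w, Γ.Adj v w → ℓ w * ℓ v = ℓ v * ℓ w)
    (hT1b : ∀ v w, Γ.Adj v w → star (ℓ w) * ℓ v = ℓ v * star (ℓ w))
    -- T2
    (hT2 : ∀ v w, v ≠ w → ¬ Γ.Adj v w → star (ℓ w) * ℓ v = 0)
    -- the vacuum vector
    (hΩ : ‖Ω‖ = 1) (hann : ∀ v, (star (ℓ v)) Ω = 0)
    -- the images of the pure tensors `e_{v₁} ⊗ ⋯ ⊗ e_{v_k}` span a dense subspace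
    (hcyc : Dense
      (Submodule.span ℂ {x : H | ∃ w : List V, ((w.map ℓ).prod) Ω = x} : Set H))
    -- `S_Γ`, the unital C*-subalgebra of `O_Γ` generated by the `s_v`
    (SΓ : StarSubalgebra ℂ (H →L[ℂ] H))
    (hSΓ : SΓ = (StarAlgebra.adjoin ℂ
      (Set.range fun v : V => ℓ v + star (ℓ v))).topologicalClosure) :
    Dense {x : H | ∃ a ∈ SΓ, a Ω = x} := by
  classical
  set A := StarAlgebra.adjoin ℂ (Set.range fun v : V => ℓ v + star (ℓ v)) with hA
  -- Key reduction lemma: annihilation applied to a word vector is 0 or a shorter word vector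
  have hL : ∀ (w : List V) (v : V),
      (star (ℓ v)) (((w.map ℓ).prod) Ω) = 0 ∨
      ∃ u : List V, u.length < w.length ∧
        (star (ℓ v)) (((w.map ℓ).prod) Ω) = ((u.map ℓ).prod) Ω := by
    intro w
    induction w with
    | nil => intro v; left; simpa using hann v
    | cons a w ih =>
      intro v
      have hexp : (star (ℓ v)) ((((a :: w).map ℓ).prod) Ω)
          = ((star (ℓ v) * ℓ a) * (w.map ℓ).prod) Ω := by
        simp [List.map_cons, List.prod_cons, mul_assoc, ContinuousLinearMap.mul_apply]
      by_cases hva : v = a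
      · right
        refine ⟨w, by simp, ?_⟩
        subst hva
        rw [hexp, hiso v, one_mul]
      · by_cases hadj : Γ.Adj v a
        · have hcomm : star (ℓ v) * ℓ a = ℓ a * star (ℓ v) := hT1b a v hadj.symm
          have hexp2 : (star (ℓ v)) ((((a :: w).map ℓ).prod) Ω)
              = (ℓ a) ((star (ℓ v)) (((w.map ℓ).prod) Ω)) := by
            rw [hexp, hcomm]
            simp [ContinuousLinearMap.mul_apply]
          rcases ih v with h0 | ⟨u, hu, hueq⟩
          · left
            rw [hexp2, h0, map_zero]
          · right
            refine ⟨a :: u, by simpa using hu, ?_⟩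
            rw [hexp2, hueq]
            simp [List.map_cons, List.prod_cons, ContinuousLinearMap.mul_apply]
        · left
          have hz : star (ℓ v) * ℓ a = 0 :=
            hT2 a v (fun h => hva h.symm) (fun h => hadj h.symm)
          rw [hexp, hz, zero_mul]
          simp
  -- Generators are in A
  have hgen : ∀ v : V, (ℓ v + star (ℓ v)) ∈ A := fun v =>
    StarAlgebra.subset_adjoin ℂ _ ⟨v, rfl⟩
  -- Main claim: every word vector is of the form a Ω for a ∈ A
  have hM : ∀ (k : ℕ) (w : List V), w.length ≤ k →
      ∃ a ∈ A, a Ω = ((w.map ℓ).prod) Ω := by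
    intro k
    induction k with
    | zero =>
      intro w hw
      have : w = [] := List.length_eq_zero_iff.mp (Nat.le_zero.mp hw)
      subst this
      exact ⟨1, one_mem A, by simp⟩
    | succ k ih =>
      intro w hw
      match w with
      | [] => exact ⟨1, one_mem A, by simp⟩
      | v :: w' =>
        have hw' : w'.length ≤ k := by simpa using hw
        obtain ⟨a, ha, haΩ⟩ := ih w' hw'
        have hsa : (ℓ v + star (ℓ v)) * a ∈ A := mul_mem (hgen v) ha
        have hgoal : (((v :: w').map ℓ).prod) Ω = (ℓ v) (((w'.map ℓ).prod) Ω) := by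
          simp [List.map_cons, List.prod_cons, ContinuousLinearMap.mul_apply]
        rcases hL w' v with h0 | ⟨u, hu, hueq⟩
        · refine ⟨(ℓ v + star (ℓ v)) * a, hsa, ?_⟩
          rw [hgoal]
          simp only [ContinuousLinearMap.mul_apply, haΩ, ContinuousLinearMap.add_apply]
          rw [h0, add_zero]
        · obtain ⟨b, hb, hbΩ⟩ := ih u (le_of_lt (lt_of_lt_of_le hu hw'))
          refine ⟨(ℓ v + star (ℓ v)) * a - b, sub_mem hsa hb, ?_⟩
          rw [hgoal]
          simp only [ContinuousLinearMap.sub_apply, ContinuousLinearMap.mul_apply, haΩ,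
            ContinuousLinearMap.add_apply]
          rw [hueq, hbΩ]
          abel
  -- The target set as a submodule
  have hAle : (A : Set (H →L[ℂ] H)) ⊆ (SΓ : Set (H →L[ℂ] H)) := by
    rw [hSΓ]
    exact A.le_topologicalClosure
  let T : Submodule ℂ H :=
    { carrier := {x : H | ∃ a ∈ SΓ, a Ω = x}
      add_mem' := by
        rintro x y ⟨a, ha, rfl⟩ ⟨b, hb, rfl⟩
        exact ⟨a + b, add_mem ha hb, rfl⟩
      zero_mem' := ⟨0, zero_mem SΓ, rfl⟩
      smul_mem' := by
        rintro c x ⟨a, ha, rfl⟩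
        exact ⟨c • a, SMulMemClass.smul_mem c ha, rfl⟩ }
  have hsub : {x : H | ∃ w : List V, ((w.map ℓ).prod) Ω = x} ⊆ (T : Set H) := by
    rintro x ⟨w, rfl⟩
    obtain ⟨a, ha, haΩ⟩ := hM w.length w le_rfl
    exact ⟨a, hAle ha, haΩ⟩
  have hspan : (Submodule.span ℂ {x : H | ∃ w : List V, ((w.map ℓ).prod) Ω = x} : Set H)
      ⊆ (T : Set H) := Submodule.span_le.mpr hsub
  exact hcyc.mono hspan
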